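/- Let m1,m2,n1,n2 ≥ 0 with min(m2,n2) = 0 and min(m1,n1) > 0, and define ²T(m1,m2,n1,n2) ⊂ Z_+^4 as the disjoint union of: {(0,b,0,d) : d ≤ n2, b ≤ n1, d+b ≤ m2}, {(a,0,0,d) : 1 ≤ a ≤ m1, d ≤ n2, d−a ≤ m2, a−2d ≤ n1}, {(0,b,c,0) : c ≥ 1, c+b ≤ m2, b+2c ≤ n1}, {(a,0,c,0) : 1 ≤ a ≤ m1, 1 ≤ c ≤ m2, a+2c ≤ n1}. Then |²T(m1,m2,n1,n2)| = |²T(m1−1,m2,n1−1,n2)| + min(n1,m2) + min(m1,n2) + 1. -/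

import Mathlib

/-- The reduced Berenstein–Zelevinsky set ²T^C for type C2, as a disjoint union
of four sets of quadruples (a,b,c,d). -/
def T2set (m1 m2 n1 n2 : ℤ) : Set (ℤ × ℤ × ℤ × ℤ) :=
  {p | (p.1 = 0 ∧ p.2.2.1 = 0 ∧ 0 ≤ p.2.1 ∧ 0 ≤ p.2.2.2 ∧
          p.2.2.2 ≤ n2 ∧ p.2.1 ≤ n1 ∧ p.2.2.2 + p.2.1 ≤ m2) ∨
       (p.2.1 = 0 ∧ p.2.2.1 = 0 ∧ 1 ≤ p.1 ∧ p.1 ≤ m1 ∧ 0 ≤ p.2.2.2 ∧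
          p.2.2.2 ≤ n2 ∧ p.2.2.2 - p.1 ≤ m2 ∧ p.1 - 2 * p.2.2.2 ≤ n1) ∨
       (p.1 = 0 ∧ p.2.2.2 = 0 ∧ 0 ≤ p.2.1 ∧ 1 ≤ p.2.2.1 ∧
          p.2.2.1 + p.2.1 ≤ m2 ∧ p.2.1 + 2 * p.2.2.1 ≤ n1) ∨
       (p.2.1 = 0 ∧ p.2.2.2 = 0 ∧ 1 ≤ p.1 ∧ p.1 ≤ m1 ∧ 1 ≤ p.2.2.1 ∧
          p.2.2.1 ≤ m2 ∧ p.1 + 2 * p.2.2.1 ≤ n1)}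

/-- Parametrization of the new points in the case `n2 = 0`. -/
def phiC (m1 n1 s : ℤ) : ℤ × ℤ × ℤ × ℤ :=
  if 2 * s < n1 then (min m1 (n1 - 2 * s), 0, s, 0)
  else if s = n1 then (0, n1, 0, 0)
  else (0, 2 * s - n1, n1 - s, 0)

lemma phiC_inv (m1 n1 s : ℤ) : (phiC m1 n1 s).2.1 + (phiC m1 n1 s).2.2.1 = s := by
  unfold phiC; split_ifs with h h' <;> simp <;> omega

lemma T2set_finite (m1 m2 n1 n2 : ℤ) : (T2set m1 m2 n1 n2).Finite := by
  apply Set.Finite.subset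
    (Set.Finite.prod (Set.finite_Icc 0 (max m1 0))
      (Set.Finite.prod (Set.finite_Icc 0 (max 0 (max n1 m2)))
        (Set.Finite.prod (Set.finite_Icc 0 (max 0 m2)) (Set.finite_Icc 0 (max 0 n2)))))
  rintro ⟨a, b, c, d⟩ hp
  simp only [T2set, Set.mem_setOf_eq] at hp
  simp only [Set.mem_prod, Set.mem_Icc]
  refine ⟨?_, ?_, ?_, ?_⟩ <;> omega

lemma T2set_mono (m1 m2 n1 n2 : ℤ) :
    T2set (m1 - 1) m2 (n1 - 1) n2 ⊆ T2set m1 m2 n1 n2 := by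
  rintro ⟨a, b, c, d⟩ hp
  simp only [T2set, Set.mem_setOf_eq] at hp ⊢
  rcases hp with h | h | h | h
  · exact Or.inl (by omega)
  · exact Or.inr (Or.inl (by omega))
  · exact Or.inr (Or.inr (Or.inl (by omega)))
  · exact Or.inr (Or.inr (Or.inr (by omega)))

lemma ncard_Icc_int (a b : ℤ) (h : a ≤ b + 1) :
    ((Set.Icc a b).ncard : ℤ) = b + 1 - a := by
  rw [← Finset.coe_Icc, Set.ncard_coe_finset, Int.card_Icc]
  omega

/-- Recursion for |²T^C| when min(m2,n2) = 0 and min(m1,n1) > 0. -/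
theorem stmt_7 (m1 m2 n1 n2 : ℤ) (hm2 : 0 ≤ m2) (hn2 : 0 ≤ n2)
    (h0 : min m2 n2 = 0) (h1 : 0 < min m1 n1) :
    ((T2set m1 m2 n1 n2).ncard : ℤ) =
      (T2set (m1 - 1) m2 (n1 - 1) n2).ncard +
        min n1 m2 + min m1 n2 + 1 := by
  have hm1 : 1 ≤ m1 := by omega
  have hn1 : 1 ≤ n1 := by omega
  have hfin := T2set_finite m1 m2 n1 n2
  have hfin' := T2set_finite (m1 - 1) m2 (n1 - 1) n2
  have hsub := T2set_mono m1 m2 n1 n2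
  set C := T2set m1 m2 n1 n2 \ T2set (m1 - 1) m2 (n1 - 1) n2 with hC
  have hcard : (T2set m1 m2 n1 n2).ncard =
      (T2set (m1 - 1) m2 (n1 - 1) n2).ncard + C.ncard := by
    rw [← Set.union_diff_cancel hsub, Set.ncard_union_eq Set.disjoint_sdiff_right hfin'
      hfin.diff]
  rw [hcard]
  push_cast
  have key : (C.ncard : ℤ) = min n1 m2 + min m1 n2 + 1 := by
    rcases (by omega : m2 = 0 ∨ n2 = 0) with rfl | rfl
    · -- case m2 = 0
      have hset : C = (fun x : ℤ => ((min m1 (n1 + 2 * x), 0, 0, x) : ℤ × ℤ × ℤ × ℤ)) ''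
          Set.Icc 0 (min m1 n2) := by
        ext ⟨a, b, c, d⟩
        simp only [hC, T2set, Set.mem_diff, Set.mem_setOf_eq, Set.mem_image, Set.mem_Icc]
        constructor
        · rintro ⟨hT, hT'⟩
          rcases hT with h | h | h | h
          · exact ((hT' (Or.inl (by omega))).elim)
          · have hkey : a = m1 ∨ a - 2 * d = n1 := by
              by_contra hc
              exact hT' (Or.inr (Or.inl (by omega)))
            refine ⟨d, by omega, ?_⟩
            simp only [Prod.mk.injEq, and_true, true_and]
            omega
          · exfalso; omega
          · exfalso; omega
        · rintro ⟨x, hx, heq⟩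
          simp only [Prod.mk.injEq, and_true, true_and] at heq
          constructor <;> omega
      rw [hset, Set.ncard_image_of_injOn, ncard_Icc_int 0 (min m1 n2) (by omega)]
      · omega
      · intro x _ y _ h
        have := congrArg (fun p : ℤ × ℤ × ℤ × ℤ => p.2.2.2) h
        simpa using this
    · -- case n2 = 0
      have hset : C = insert ((min m1 n1, 0, 0, 0) : ℤ × ℤ × ℤ × ℤ)
          (phiC m1 n1 '' Set.Icc 1 (min n1 m2)) := by
        ext ⟨a, b, c, d⟩
        simp only [hC, T2set, Set.mem_diff, Set.mem_setOf_eq, Set.mem_insert_iff,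
          Set.mem_image, Set.mem_Icc]
        constructor
        · rintro ⟨hT, hT'⟩
          rcases hT with h | h | h | h
          · have hkey : n1 ≤ b := by
              by_contra hc
              exact hT' (Or.inl (by omega))
            right
            refine ⟨n1, by omega, ?_⟩
            unfold phiC
            split_ifs <;> simp only [Prod.mk.injEq, and_true, true_and] <;> omega
          · have hkey : a = m1 ∨ a = n1 := by
              by_contra hc
              exact hT' (Or.inr (Or.inl (by omega)))
            left
            simp only [Prod.mk.injEq, and_true, true_and]
            omega
          · have hkey : n1 ≤ b + 2 * c := by
              by_contra hc
              exact hT' (Or.inr (Or.inr (Or.inl (by omega))))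
            right
            refine ⟨b + c, by omega, ?_⟩
            unfold phiC
            split_ifs <;> simp only [Prod.mk.injEq, and_true, true_and] <;> omega
          · have hkey : a = m1 ∨ a + 2 * c = n1 := by
              by_contra hc
              exact hT' (Or.inr (Or.inr (Or.inr (by omega))))
            right
            refine ⟨c, by omega, ?_⟩
            unfold phiC
            split_ifs <;> simp only [Prod.mk.injEq, and_true, true_and] <;> omega
        · rintro (heq | ⟨s, hs, heq⟩)
          · simp only [Prod.mk.injEq, and_true, true_and] at heq
            constructor <;> omega
          · unfold phiC at heq
            split_ifs at heq with h h' <;>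
              simp only [Prod.mk.injEq, and_true, true_and] at heq <;>
              constructor <;> omega
      have hnotmem : ((min m1 n1, 0, 0, 0) : ℤ × ℤ × ℤ × ℤ) ∉
          phiC m1 n1 '' Set.Icc 1 (min n1 m2) := by
        rintro ⟨s, hs, heq⟩
        simp only [Set.mem_Icc] at hs
        have := phiC_inv m1 n1 s
        rw [heq] at this
        simp at this
        omega
      have hinj : Set.InjOn (phiC m1 n1) (Set.Icc 1 (min n1 m2)) := by
        intro x _ y _ h
        rw [← phiC_inv m1 n1 x, ← phiC_inv m1 n1 y, h]
      rw [hset, Set.ncard_insert_of_notMem hnotmem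
        (((Set.finite_Icc _ _).image _)),
        Set.ncard_image_of_injOn hinj]
      have := ncard_Icc_int 1 (min n1 m2) (by omega)
      push_cast
      omega
  omega
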